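/- Let $G_1,G_2$ be connected graphs on $[m]$ and $[n]$ respectively, $X=(x_{ij})$ an $m\times n$ matrix of indeterminates over a field $K$, and $x=\prod_{i,j}x_{ij}$. Then the saturation $J_{G_1,G_2}:x^\infty$ equals $I_2(X)$, the ideal of all $2\times 2$ minors of $X$. -/

import Mathlib

open MvPolynomial

/-- The binomial edge ideal of a pair of graphs. -/
noncomputable def pairIdeal (K : Type) [Field K] {α β : Type}
    (G1 : SimpleGraph α) (G2 : SimpleGraph β) : Ideal (MvPolynomial (α × β) K) :=
  Ideal.span {p | ∃ i j k l, G1.Adj i j ∧ G2.Adj k l ∧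
    p = X (i, k) * X (j, l) - X (i, l) * X (j, k)}

/-- The ideal of all 2×2 minors of the generic matrix. -/
noncomputable def minors2 (K : Type) [Field K] (α β : Type) : Ideal (MvPolynomial (α × β) K) :=
  Ideal.span {p | ∃ i j k l, i ≠ j ∧ k ≠ l ∧
    p = X (i, k) * X (j, l) - X (i, l) * X (j, k)}

namespace Stmt4

variable {K : Type} [Field K] {m n : ℕ}

/-! ### Reverse direction -/

section Reverse

variable (G1 : SimpleGraph (Fin m)) (G2 : SimpleGraph (Fin n))

local notation "xP" => (∏ p : Fin m × Fin n, (X p : MvPolynomial (Fin m × Fin n) K))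

lemma lemmaR {k l : Fin n} (hkl : G2.Adj k l) {i j : Fin m} (w : G1.Walk i j) :
    ∃ N : ℕ, xP ^ N * (X (i, k) * X (j, l) - X (i, l) * X (j, k)) ∈ pairIdeal K G1 G2 := by
  induction w with
  | nil =>
    exact ⟨0, by rw [show (X (_, k) * X (_, l) - X (_, l) * X (_, k) :
      MvPolynomial (Fin m × Fin n) K) = 0 by ring, mul_zero]; exact Ideal.zero_mem _⟩
  | @cons i t j hit w ih =>
    obtain ⟨N, hN⟩ := ih
    refine ⟨N + 1, ?_⟩
    have hx : xP = X (t, k) * ∏ p ∈ Finset.univ.erase (t, k), X p :=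
      (Finset.mul_prod_erase Finset.univ _ (Finset.mem_univ _)).symm
    have key : xP ^ (N + 1) * (X (i, k) * X (j, l) - X (i, l) * X (j, k)) =
        (∏ p ∈ Finset.univ.erase (t, k), X p) * X (i, k) *
          (xP ^ N * (X (t, k) * X (j, l) - X (t, l) * X (j, k))) +
        (xP ^ N * (∏ p ∈ Finset.univ.erase (t, k), X p) * X (j, k)) *
          (X (i, k) * X (t, l) - X (i, l) * X (t, k)) := by
      rw [pow_succ]
      nth_rewrite 2 [hx]
      ring
    rw [key]
    refine Ideal.add_mem _ (Ideal.mul_mem_left _ _ hN) (Ideal.mul_mem_left _ _ ?_)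
    exact Ideal.subset_span ⟨i, t, k, l, hit, hkl, rfl⟩

lemma lemmaC (h1 : G1.Connected) {i j : Fin m} {k l : Fin n} (w : G2.Walk k l) :
    ∃ N : ℕ, xP ^ N * (X (i, k) * X (j, l) - X (i, l) * X (j, k)) ∈ pairIdeal K G1 G2 := by
  induction w with
  | nil =>
    exact ⟨0, by rw [show (X (i, _) * X (j, _) - X (i, _) * X (j, _) :
      MvPolynomial (Fin m × Fin n) K) = 0 by ring, mul_zero]; exact Ideal.zero_mem _⟩
  | @cons k t l hkt w ih =>
    obtain ⟨N1, hN1⟩ := ih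
    obtain ⟨N2, hN2⟩ := lemmaR (K := K) G1 G2 hkt ((h1.preconnected i j).some)
    refine ⟨N1 + N2 + 1, ?_⟩
    have hx : xP = X (i, t) * ∏ p ∈ Finset.univ.erase (i, t), X p :=
      (Finset.mul_prod_erase Finset.univ _ (Finset.mem_univ _)).symm
    have key : xP ^ (N1 + N2 + 1) * (X (i, k) * X (j, l) - X (i, l) * X (j, k)) =
        (xP ^ N2 * (∏ p ∈ Finset.univ.erase (i, t), X p) * X (i, k)) *
          (xP ^ N1 * (X (i, t) * X (j, l) - X (i, l) * X (j, t))) +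
        (xP ^ N1 * (∏ p ∈ Finset.univ.erase (i, t), X p) * X (i, l)) *
          (xP ^ N2 * (X (i, k) * X (j, t) - X (i, t) * X (j, k))) := by
      rw [show N1 + N2 + 1 = (N1 + N2) + 1 from rfl, pow_succ, pow_add]
      nth_rewrite 3 [hx]
      ring
    rw [key]
    exact Ideal.add_mem _ (Ideal.mul_mem_left _ _ hN1) (Ideal.mul_mem_left _ _ hN2)

lemma reverse_dir (h1 : G1.Connected) (h2 : G2.Connected)
    {f : MvPolynomial (Fin m × Fin n) K} (hf : f ∈ minors2 K (Fin m) (Fin n)) :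
    ∃ N : ℕ, xP ^ N * f ∈ pairIdeal K G1 G2 := by
  refine Submodule.span_induction ?_ ⟨0, by simp⟩ ?_ ?_ hf
  · rintro p ⟨i, j, k, l, -, -, rfl⟩
    exact lemmaC G1 G2 h1 ((h2.preconnected k l).some)
  · rintro f g - - ⟨N1, hN1⟩ ⟨N2, hN2⟩
    refine ⟨N1 + N2, ?_⟩
    have : xP ^ (N1 + N2) * (f + g) =
        xP ^ N2 * (xP ^ N1 * f) + xP ^ N1 * (xP ^ N2 * g) := by
      rw [pow_add]; ring
    rw [this]
    exact Ideal.add_mem _ (Ideal.mul_mem_left _ _ hN1) (Ideal.mul_mem_left _ _ hN2)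
  · rintro c f - ⟨N, hN⟩
    refine ⟨N, ?_⟩
    have : xP ^ N * (c • f) = c • (xP ^ N * f) := by
      rw [smul_eq_mul, smul_eq_mul]; ring
    rw [this]
    exact Ideal.mul_mem_left _ _ hN

end Reverse



noncomputable def φ : MvPolynomial (Fin m × Fin n) K →ₐ[K] MvPolynomial (Fin m ⊕ Fin n) K :=
  aeval fun p => X (Sum.inl p.1) * X (Sum.inr p.2)

noncomputable def μ (a : (Fin m × Fin n) →₀ ℕ) : (Fin m ⊕ Fin n) →₀ ℕ :=
  Finsupp.equivFunOnFinite.symm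
    (Sum.elim (fun i => ∑ j, a (i, j)) (fun j => ∑ i, a (i, j)))

@[simp] lemma μ_inl (a : (Fin m × Fin n) →₀ ℕ) (i : Fin m) :
    μ a (Sum.inl i) = ∑ j, a (i, j) := by simp [μ]

@[simp] lemma μ_inr (a : (Fin m × Fin n) →₀ ℕ) (j : Fin n) :
    μ a (Sum.inr j) = ∑ i, a (i, j) := by simp [μ]

lemma φ_monomial (a : (Fin m × Fin n) →₀ ℕ) (r : K) :
    φ (monomial a r) = monomial (μ a) r := by
  have h1 : ∏ p : Fin m × Fin n, (X (Sum.inl p.1) : MvPolynomial (Fin m ⊕ Fin n) K) ^ a p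
      = ∏ i, X (Sum.inl i) ^ ∑ j, a (i, j) := by
    rw [Fintype.prod_prod_type]
    exact Finset.prod_congr rfl fun i _ => by
      simpa using Finset.prod_pow_eq_pow_sum Finset.univ (fun y => a (i, y))
        (X (Sum.inl i) : MvPolynomial (Fin m ⊕ Fin n) K)
  have h2 : ∏ p : Fin m × Fin n, (X (Sum.inr p.2) : MvPolynomial (Fin m ⊕ Fin n) K) ^ a p
      = ∏ j, X (Sum.inr j) ^ ∑ i, a (i, j) := by
    rw [Fintype.prod_prod_type, Finset.prod_comm]
    exact Finset.prod_congr rfl fun j _ => by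
      simpa using Finset.prod_pow_eq_pow_sum Finset.univ (fun y => a (y, j))
        (X (Sum.inr j) : MvPolynomial (Fin m ⊕ Fin n) K)
  rw [φ, aeval_monomial, monomial_eq]
  congr 1
  rw [Finsupp.prod_fintype _ _ (fun p => pow_zero _),
    Finsupp.prod_fintype _ _ (fun p => pow_zero _)]
  rw [Fintype.prod_sum_type]
  simp only [mul_pow]
  rw [Finset.prod_mul_distrib, h1, h2]
  simp



lemma sum_row_single (p : Fin m × Fin n) (v : ℕ) (i : Fin m) :
    ∑ j, (Finsupp.single p v) (i, j) = if p.1 = i then v else 0 := by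
  rcases p with ⟨i', k⟩
  by_cases h : i' = i
  · subst h
    simp [Finsupp.single_apply, Prod.ext_iff]
  · simp [Finsupp.single_apply, Prod.ext_iff, h]

lemma sum_col_single (p : Fin m × Fin n) (v : ℕ) (j : Fin n) :
    ∑ i, (Finsupp.single p v) (i, j) = if p.2 = j then v else 0 := by
  rcases p with ⟨i', k⟩
  by_cases h : k = j
  · subst h
    simp [Finsupp.single_apply, Prod.ext_iff]
  · simp [Finsupp.single_apply, Prod.ext_iff, h]

lemma exists_lt_of_sum_eq {ι : Type*} {s : Finset ι} {f g : ι → ℕ}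
    (h : ∑ i ∈ s, f i = ∑ i ∈ s, g i) {i : ι} (hi : i ∈ s) (hfg : g i < f i) :
    ∃ j ∈ s, f j < g j := by
  by_contra h'
  push_neg at h'
  have := Finset.sum_lt_sum h' ⟨i, hi, hfg⟩
  omega

lemma swap_lemma (D : ℕ) : ∀ a b : (Fin m × Fin n) →₀ ℕ,
    (∑ p : Fin m × Fin n, ((a p - b p) + (b p - a p))) = D →
    (∀ i, ∑ j, a (i, j) = ∑ j, b (i, j)) →
    (∀ j, ∑ i, a (i, j) = ∑ i, b (i, j)) →
    (monomial a (1 : K) - monomial b 1) ∈ minors2 K (Fin m) (Fin n) := by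
  induction D using Nat.strong_induction_on with
  | _ D IH =>
  intro a b hD hrow hcol
  by_cases hab : a = b
  · rw [hab]; simp
  have htot : ∑ p : Fin m × Fin n, a p = ∑ p : Fin m × Fin n, b p := by
    rw [Fintype.sum_prod_type, Fintype.sum_prod_type]
    exact Finset.sum_congr rfl fun i _ => hrow i
  have hex : ∃ p : Fin m × Fin n, b p < a p := by
    by_contra h
    push_neg at h
    exact hab (Finsupp.ext fun p =>
      (Finset.sum_eq_sum_iff_of_le (fun p _ => h p)).mp htot p (Finset.mem_univ p))
  obtain ⟨⟨i, k⟩, hik⟩ := hex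
  obtain ⟨j, -, hjk⟩ :=
    exists_lt_of_sum_eq (f := fun i' => a (i', k)) (g := fun i' => b (i', k))
      (hcol k) (Finset.mem_univ i) hik
  obtain ⟨l, -, hjl⟩ :=
    exists_lt_of_sum_eq (f := fun l' => b (j, l')) (g := fun l' => a (j, l'))
      (hrow j).symm (Finset.mem_univ k) hjk
  have hij : i ≠ j := by intro h; subst h; omega
  have hkl : k ≠ l := by intro h; subst h; omega
  classical
  set c : (Fin m × Fin n) →₀ ℕ := Finsupp.equivFunOnFinite.symm
    (fun p => a p - (if (i, k) = p then 1 else 0) - (if (j, l) = p then 1 else 0)) with hcdef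
  have hc : ∀ p, c p = a p - (Finsupp.single (i, k) 1) p - (Finsupp.single (j, l) 1) p := by
    intro p
    simp [hcdef, Finsupp.single_apply]
  have ha : a = c + Finsupp.single (i, k) 1 + Finsupp.single (j, l) 1 := by
    ext p
    simp only [Finsupp.add_apply, hc p, Finsupp.single_apply]
    by_cases h1 : (i, k) = p <;> by_cases h2 : (j, l) = p
    · exfalso; rw [← h2] at h1; exact hij (congrArg Prod.fst h1)
    · have : 1 ≤ a p := by rw [← h1]; omega
      simp [h1, h2]; omega
    · have : 1 ≤ a p := by rw [← h2]; omega
      simp [h1, h2]; omega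
    · simp [h1, h2]
  set a' : (Fin m × Fin n) →₀ ℕ := c + Finsupp.single (i, l) 1 + Finsupp.single (j, k) 1
    with ha'
  have hva : ∀ p, a' p = c p + (Finsupp.single (i, l) 1) p + (Finsupp.single (j, k) 1) p := by
    intro p; rw [ha']; simp
  -- rows of a' match rows of b
  have hrowa : ∀ i', ∑ j', a (i', j') =
      (∑ j', c (i', j')) + ((if i = i' then 1 else 0) + (if j = i' then 1 else 0)) := by
    intro i'
    conv_lhs => rw [ha]
    simp only [Finsupp.add_apply]
    rw [Finset.sum_add_distrib, Finset.sum_add_distrib, sum_row_single, sum_row_single]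
    simp only [Prod.fst]
    split_ifs <;> omega
  have hrowa' : ∀ i', ∑ j', a' (i', j') =
      (∑ j', c (i', j')) + ((if i = i' then 1 else 0) + (if j = i' then 1 else 0)) := by
    intro i'
    conv_lhs => rw [ha']
    simp only [Finsupp.add_apply]
    rw [Finset.sum_add_distrib, Finset.sum_add_distrib, sum_row_single, sum_row_single]
    simp only [Prod.fst]
    split_ifs <;> omega
  have hrow' : ∀ i', ∑ j', a' (i', j') = ∑ j', b (i', j') := by
    intro i'
    have := hrow i'
    have e1 := hrowa i'
    have e2 := hrowa' i'
    omega
  have hcola : ∀ j', ∑ i', a (i', j') =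
      (∑ i', c (i', j')) + ((if k = j' then 1 else 0) + (if l = j' then 1 else 0)) := by
    intro j'
    conv_lhs => rw [ha]
    simp only [Finsupp.add_apply]
    rw [Finset.sum_add_distrib, Finset.sum_add_distrib, sum_col_single, sum_col_single]
    simp only [Prod.snd]
    split_ifs <;> omega
  have hcola' : ∀ j', ∑ i', a' (i', j') =
      (∑ i', c (i', j')) + ((if l = j' then 1 else 0) + (if k = j' then 1 else 0)) := by
    intro j'
    conv_lhs => rw [ha']
    simp only [Finsupp.add_apply]
    rw [Finset.sum_add_distrib, Finset.sum_add_distrib, sum_col_single, sum_col_single]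
    simp only [Prod.snd]
    split_ifs <;> omega
  have hcol' : ∀ j', ∑ i', a' (i', j') = ∑ i', b (i', j') := by
    intro j'
    have := hcol j'
    have e1 := hcola j'
    have e2 := hcola' j'
    omega
  -- values of a'
  have hone : (1 : ℕ) ≤ a (i, k) := by omega
  have hone' : (1 : ℕ) ≤ a (j, l) := by omega
  have hv1 : a' (i, k) = a (i, k) - 1 := by
    rw [hva, hc]
    simp [Finsupp.single_apply, Prod.ext_iff, hij, hkl, Ne.symm hij, Ne.symm hkl]
  have hv2 : a' (j, l) = a (j, l) - 1 := by
    rw [hva, hc]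
    simp [Finsupp.single_apply, Prod.ext_iff, hij, hkl, Ne.symm hij, Ne.symm hkl]
  have hv3 : a' (i, l) = a (i, l) + 1 := by
    rw [hva, hc]
    simp [Finsupp.single_apply, Prod.ext_iff, hij, hkl, Ne.symm hij, Ne.symm hkl]
  have hv4 : a' (j, k) = a (j, k) + 1 := by
    rw [hva, hc]
    simp [Finsupp.single_apply, Prod.ext_iff, hij, hkl, Ne.symm hij, Ne.symm hkl]
  have hvout : ∀ p : Fin m × Fin n,
      p ≠ (i, k) → p ≠ (i, l) → p ≠ (j, k) → p ≠ (j, l) → a' p = a p := by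
    intro p h1 h2 h3 h4
    rw [hva, hc]
    simp [Finsupp.single_apply, Ne.symm h1, Ne.symm h2, Ne.symm h3, Ne.symm h4]
  -- the sum splitting
  have hsplit : ∀ f : Fin m × Fin n → ℕ, ∑ p : Fin m × Fin n, f p =
      f (i, k) + f (i, l) + f (j, k) + f (j, l) +
        ∑ p ∈ Finset.univ \ ({(i, k), (i, l), (j, k), (j, l)} : Finset (Fin m × Fin n)), f p := by
    intro f
    rw [← Finset.sum_sdiff (Finset.subset_univ ({(i, k), (i, l), (j, k), (j, l)} :
      Finset (Fin m × Fin n)))]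
    rw [Finset.sum_insert (by simp [Prod.ext_iff, hij, hkl]),
      Finset.sum_insert (by simp [Prod.ext_iff, hij, hkl]),
      Finset.sum_insert (by simp [Prod.ext_iff, hij, hkl]),
      Finset.sum_singleton]
    ring
  have hrest : ∑ p ∈ Finset.univ \ ({(i, k), (i, l), (j, k), (j, l)} :
        Finset (Fin m × Fin n)), ((a' p - b p) + (b p - a' p)) =
      ∑ p ∈ Finset.univ \ ({(i, k), (i, l), (j, k), (j, l)} :
        Finset (Fin m × Fin n)), ((a p - b p) + (b p - a p)) := by
    refine Finset.sum_congr rfl fun p hp => ?_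
    simp only [Finset.mem_sdiff, Finset.mem_insert, Finset.mem_singleton] at hp
    push_neg at hp
    rw [hvout p hp.2.1 hp.2.2.1 hp.2.2.2.1 hp.2.2.2.2]
  have hlt : (∑ p : Fin m × Fin n, ((a' p - b p) + (b p - a' p))) < D := by
    have e1 := hsplit (fun p => (a' p - b p) + (b p - a' p))
    have e2 := hsplit (fun p => (a p - b p) + (b p - a p))
    beta_reduce at e1 e2
    rw [← hD]
    omega
  -- the monomial identity
  have hX : ∀ p : Fin m × Fin n, (X p : MvPolynomial (Fin m × Fin n) K) =
      monomial (Finsupp.single p 1) 1 := fun p => by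
    rw [← X_pow_eq_monomial, pow_one]
  have hmul : ∀ (p q : Fin m × Fin n) (d : (Fin m × Fin n) →₀ ℕ),
      (monomial d (1 : K)) * (X p * X q) =
        monomial (d + Finsupp.single p 1 + Finsupp.single q 1) 1 := by
    intro p q d
    simp [hX, monomial_mul, add_assoc]
  have hkey : monomial a (1 : K) - monomial b 1 =
      monomial c 1 * (X (i, k) * X (j, l) - X (i, l) * X (j, k)) +
        (monomial a' 1 - monomial b 1) := by
    rw [mul_sub, hmul, hmul, ← ha, ← ha']
    ring
  rw [hkey]
  exact add_mem
    (Ideal.mul_mem_left _ _ (Ideal.subset_span ⟨i, j, k, l, hij, hkl, rfl⟩))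
    (IH _ hlt a' b rfl hrow' hcol')

lemma minors2_le_ker {f : MvPolynomial (Fin m × Fin n) K}
    (hf : f ∈ minors2 K (Fin m) (Fin n)) : φ f = 0 := by
  refine Submodule.span_induction ?_ (map_zero _) ?_ ?_ hf
  · rintro p ⟨i, j, k, l, hij, hkl, rfl⟩
    simp only [φ, map_sub, map_mul, aeval_X]
    ring
  · intro f g _ _ hf hg
    rw [map_add, hf, hg, add_zero]
  · intro c f _ hf
    rw [smul_eq_mul, map_mul, hf, mul_zero]

lemma ker_le_minors2 (N : ℕ) : ∀ f : MvPolynomial (Fin m × Fin n) K,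
    f.support.card = N → φ f = 0 → f ∈ minors2 K (Fin m) (Fin n) := by
  induction N using Nat.strong_induction_on with
  | _ N IH =>
  intro f hcard hf
  classical
  by_cases h0 : f = 0
  · rw [h0]; exact Ideal.zero_mem _
  obtain ⟨a, ha⟩ := Finset.nonempty_of_ne_empty (fun h => h0 (support_eq_empty.mp h))
  set S : Finset ((Fin m × Fin n) →₀ ℕ) := f.support.filter (fun b => μ b = μ a) with hS
  have haS : a ∈ S := by simp [hS, ha]
  have hφf : φ f = ∑ b ∈ f.support, monomial (μ b) (coeff b f) := by
    conv_lhs => rw [← support_sum_monomial_coeff f]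
    rw [map_sum]
    exact Finset.sum_congr rfl fun b _ => φ_monomial b _
  have sum0 : ∑ b ∈ S, coeff b f = 0 := by
    have h : coeff (μ a) (∑ b ∈ f.support, monomial (μ b) (coeff b f)) = 0 := by
      rw [← hφf, hf, coeff_zero]
    rw [coeff_sum] at h
    simp only [coeff_monomial] at h
    rw [hS, Finset.sum_filter]
    exact h
  set h' : MvPolynomial (Fin m × Fin n) K :=
    ∑ b ∈ S, (monomial b (coeff b f) - monomial a (coeff b f)) with hh
  have hmem : h' ∈ minors2 K (Fin m) (Fin n) := by
    rw [hh]
    refine Ideal.sum_mem _ fun b hb => ?_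
    have hb' : μ b = μ a := by
      have := Finset.mem_filter.mp (hS ▸ hb)
      exact this.2
    have heq : monomial b (coeff b f) - monomial a (coeff b f)
        = C (coeff b f) * (monomial b (1 : K) - monomial a 1) := by
      rw [mul_sub, C_mul_monomial, C_mul_monomial, mul_one]
    rw [heq]
    refine Ideal.mul_mem_left _ _ ?_
    refine swap_lemma _ b a rfl ?_ ?_
    · intro i
      have := congrArg (fun d => d (Sum.inl i)) hb'
      simpa using this
    · intro j
      have := congrArg (fun d => d (Sum.inr j)) hb'
      simpa using this
  have hsum : h' = ∑ b ∈ S, monomial b (coeff b f) := by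
    rw [hh, Finset.sum_sub_distrib, ← map_sum (monomial a) (fun b => coeff b f) S, sum0,
      monomial_zero, sub_zero]
  have hcoeffh : ∀ b', coeff b' h' = if b' ∈ S then coeff b' f else 0 := by
    intro b'
    rw [hsum, coeff_sum]
    simp only [coeff_monomial]
    exact Finset.sum_ite_eq' S b' (fun b => coeff b f)
  have hgsupp : (f - h').support ⊆ f.support \ S := by
    intro b' hb'
    rw [mem_support_iff] at hb'
    rw [coeff_sub, hcoeffh b'] at hb'
    by_cases hbS : b' ∈ S
    · simp [hbS] at hb'
    · simp only [hbS, if_false, sub_zero] at hb'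
      exact Finset.mem_sdiff.mpr ⟨mem_support_iff.mpr hb', hbS⟩
  have hcard' : (f - h').support.card < N := by
    calc (f - h').support.card ≤ (f.support \ S).card := Finset.card_le_card hgsupp
    _ < f.support.card := Finset.card_lt_card
        (Finset.sdiff_ssubset (Finset.filter_subset _ _) ⟨a, haS⟩)
    _ = N := hcard
  have hφg : φ (f - h') = 0 := by
    rw [map_sub, hf, minors2_le_ker hmem, sub_zero]
  have hg := IH _ hcard' (f - h') rfl hφg
  have hfeq : f = (f - h') + h' := by ring
  rw [hfeq]
  exact add_mem hg hmem


end Stmt4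

open Stmt4 in
/-- For connected graphs `G₁, G₂`, the saturation `J_{G₁,G₂} : x^∞`, where `x` is the
product of all the variables, equals `I₂(X)`. -/
theorem stmt4 (K : Type) [Field K] (m n : ℕ)
    (G1 : SimpleGraph (Fin m)) (G2 : SimpleGraph (Fin n))
    (h1 : G1.Connected) (h2 : G2.Connected) (f : MvPolynomial (Fin m × Fin n) K) :
    (∃ N : ℕ, (∏ p : Fin m × Fin n, X p) ^ N * f ∈ pairIdeal K G1 G2) ↔
      f ∈ minors2 K (Fin m) (Fin n) := by
  constructor
  · rintro ⟨N, hN⟩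
    have hsub : pairIdeal K G1 G2 ≤ minors2 K (Fin m) (Fin n) := by
      rw [pairIdeal, Ideal.span_le]
      rintro p ⟨i, j, k, l, hij, hkl, rfl⟩
      exact Ideal.subset_span ⟨i, j, k, l, hij.ne, hkl.ne, rfl⟩
    have h2' : φ ((∏ p : Fin m × Fin n, (X p : MvPolynomial (Fin m × Fin n) K)) ^ N * f) = 0 :=
      minors2_le_ker (hsub hN)
    rw [map_mul, map_pow, map_prod] at h2'
    have hx : (∏ p : Fin m × Fin n, φ (X p : MvPolynomial (Fin m × Fin n) K)) ≠ 0 := by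
      refine Finset.prod_ne_zero_iff.mpr fun p _ => ?_
      rw [show φ (X p : MvPolynomial (Fin m × Fin n) K)
          = X (Sum.inl p.1) * X (Sum.inr p.2) by simp [φ]]
      exact mul_ne_zero (X_ne_zero _) (X_ne_zero _)
    have hφf : φ f = 0 := by
      rcases mul_eq_zero.mp h2' with h | h
      · exact absurd h (pow_ne_zero _ hx)
      · exact h
    exact ker_le_minors2 _ f rfl hφf
  · exact reverse_dir G1 G2 h1 h2
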